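/- Let σ(x) = 1/(1+exp(−x)) be the logistic function. For all real numbers a, b ≤ 0, (σ(a) − σ(b))² ≥ (1/16) · exp(2·min(a,b)) · (a − b)². -/

import Mathlib

/-- The logistic (sigmoid) function `σ(x) = 1/(1+exp(−x))`. -/
noncomputable def logistic (x : ℝ) : ℝ := 1 / (1 + Real.exp (-x))

lemma logistic_lin_lb (a b : ℝ) (hba : b ≤ a) (ha : a ≤ 0) :
    (1/4) * Real.exp b * (a - b) ≤ logistic a - logistic b := by
  unfold logistic
  set x := Real.exp (-a) with hxdef
  set y := Real.exp (-b) with hydef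
  have hx1 : 1 ≤ x := by
    rw [hxdef]; exact Real.one_le_exp (by linarith)
  have hxy : x ≤ y := by
    rw [hxdef, hydef]; exact Real.exp_le_exp.mpr (by linarith)
  have hx0 : 0 < x := lt_of_lt_of_le one_pos hx1
  have hy0 : 0 < y := lt_of_lt_of_le hx0 hxy
  have hkey : x * (a - b) ≤ y - x := by
    have h := Real.add_one_le_exp (a - b)
    have hexp : Real.exp (a - b) = y / x := by
      rw [hxdef, hydef, ← Real.exp_sub]; ring_nf
    rw [hexp] at h
    have := (mul_le_mul_of_nonneg_left h (le_of_lt hx0))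
    calc x * (a - b) = x * (a - b + 1) - x := by ring
      _ ≤ x * (y / x) - x := by linarith
      _ = y - x := by field_simp
  have heb : Real.exp b = 1 / y := by
    rw [hydef, Real.exp_neg, one_div, inv_inv]
  rw [heb]
  have hab : 0 ≤ a - b := by linarith
  calc 1/4 * (1/y) * (a - b) = (a - b) / (4*y) := by ring
    _ ≤ (y - x) / ((1+x)*(1+y)) := by
        rw [div_le_div_iff₀ (by positivity) (by positivity)]
        nlinarith [mul_le_mul_of_nonneg_left hkey (by positivity : (0:ℝ) ≤ 4*y),
    mul_nonneg (mul_nonneg hab (by linarith : (0:ℝ) ≤ x - 1)) hy0.le,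
    mul_nonneg (mul_nonneg hab (by linarith : (0:ℝ) ≤ y - 1)) hx0.le,
    mul_nonneg hab (by nlinarith : (0:ℝ) ≤ (x-1)*(y-1))]
    _ = 1/(1+x) - 1/(1+y) := by
        field_simp
        ring

lemma sq_case (a b : ℝ) (hba : b ≤ a) (ha : a ≤ 0) :
    (1 / 16) * Real.exp (2 * b) * (a - b) ^ 2
      ≤ (logistic a - logistic b) ^ 2 := by
  have h := logistic_lin_lb a b hba ha
  have h0 : 0 ≤ (1/4) * Real.exp b * (a - b) := by
    have := Real.exp_pos b; nlinarith
  have := pow_le_pow_left₀ h0 h 2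
  calc (1 / 16) * Real.exp (2 * b) * (a - b) ^ 2
      = ((1/4) * Real.exp b * (a - b)) ^ 2 := by
        rw [two_mul, Real.exp_add]; ring
    _ ≤ (logistic a - logistic b) ^ 2 := this

/-- For `a, b ≤ 0`, `(σ(a) − σ(b))² ≥ (1/16)·exp(2·min(a,b))·(a − b)²`. -/
theorem sq_logistic_sub_ge (a b : ℝ) (ha : a ≤ 0) (hb : b ≤ 0) :
    (1 / 16) * Real.exp (2 * min a b) * (a - b) ^ 2
      ≤ (logistic a - logistic b) ^ 2 := by
  rcases le_total b a with h | h
  · rw [min_eq_right h]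
    exact sq_case a b h ha
  · rw [min_eq_left h]
    have := sq_case b a h hb
    calc (1 / 16) * Real.exp (2 * a) * (a - b) ^ 2
        = (1 / 16) * Real.exp (2 * a) * (b - a) ^ 2 := by ring
      _ ≤ (logistic b - logistic a) ^ 2 := this
      _ = (logistic a - logistic b) ^ 2 := by ring
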